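/- Let μ be a finite Borel measure on a finite-measure interval [0,ζ] (ζ > 0) that is absolutely continuous with respect to Lebesgue measure λ, with density f. Then for any Borel set E ⊆ [0,ζ] and any M ≥ 1, μ(E) ≤ e^M·λ(E) + (1/M)·∫_{[0,ζ]} ℓ(f(z)) dλ(z), where ℓ(x) = x·log x − x + 1. -/

import Mathlib

open MeasureTheory

/-- `ℓ(x) = x log x − x + 1` (with the convention `0·log 0 = 0`). -/
noncomputable def ell (x : ℝ) : ℝ := x * Real.log x - x + 1

lemma ell_nonneg {x : ℝ} (hx : 0 ≤ x) : 0 ≤ ell x := by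
  rcases eq_or_lt_of_le hx with h | h
  · simp [ell, ← h]
  · have h1 : Real.log x⁻¹ ≤ x⁻¹ - 1 := Real.log_le_sub_one_of_pos (by positivity)
    rw [Real.log_inv] at h1
    have h2 : x * (-Real.log x) ≤ x * (x⁻¹ - 1) := mul_le_mul_of_nonneg_left h1 hx
    rw [mul_sub, mul_inv_cancel₀ h.ne'] at h2
    unfold ell; nlinarith

lemma key_ineq {x M : ℝ} (hx : 0 ≤ x) (hM : 1 ≤ M) :
    x ≤ Real.exp M + (1 / M) * ell x := by
  have hM0 : 0 < M := lt_of_lt_of_le one_pos hM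
  have hxM : x * M ≤ Real.exp M + ell x := by
    rcases eq_or_lt_of_le hx with h | h
    · have : 0 ≤ Real.exp M + ell 0 := by
        have := ell_nonneg (le_refl (0:ℝ)); positivity
      simpa [← h] using this
    · have h1 : (M - Real.log x) + 1 ≤ Real.exp (M - Real.log x) :=
        Real.add_one_le_exp _
      rw [Real.exp_sub, Real.exp_log h] at h1
      have h2 : x * ((M - Real.log x) + 1) ≤ x * (Real.exp M / x) :=
        mul_le_mul_of_nonneg_left h1 hx
      rw [mul_div_cancel₀ _ h.ne'] at h2
      unfold ell; nlinarith [ell_nonneg hx]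
  have h3 : x ≤ Real.exp M / M + ell x / M := by
    rw [← add_div, le_div_iff₀ hM0]; linarith
  have h4 : Real.exp M / M ≤ Real.exp M := div_le_self (Real.exp_nonneg M) hM
  calc x ≤ Real.exp M / M + ell x / M := h3
    _ ≤ Real.exp M + (1 / M) * ell x := by rw [one_div, inv_mul_eq_div]; linarith

theorem measure_le_exp_add_entropy (ζ : ℝ) (hζ : 0 < ζ) (f : ℝ → ℝ)
    (hf_nonneg : ∀ z, 0 ≤ f z)
    (hf_int : IntegrableOn f (Set.Icc 0 ζ))
    (hℓf_int : IntegrableOn (fun z => ell (f z)) (Set.Icc 0 ζ))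
    (E : Set ℝ) (hE : MeasurableSet E) (hEsub : E ⊆ Set.Icc 0 ζ)
    (M : ℝ) (hM : 1 ≤ M) :
    ∫ z in E, f z ≤ Real.exp M * (volume E).toReal
      + (1 / M) * ∫ z in Set.Icc 0 ζ, ell (f z) := by
  have hM0 : 0 < M := lt_of_lt_of_le one_pos hM
  have hEint_f : IntegrableOn f E := hf_int.mono_set hEsub
  have hEint_ell : IntegrableOn (fun z => ell (f z)) E := hℓf_int.mono_set hEsub
  have hEfin : volume E < ⊤ :=
    lt_of_le_of_lt (measure_mono hEsub) measure_Icc_lt_top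
  have hconst : IntegrableOn (fun _ : ℝ => Real.exp M) E :=
    integrableOn_const hEfin.ne
  have hsum : IntegrableOn (fun z => Real.exp M + (1 / M) * ell (f z)) E :=
    hconst.add (hEint_ell.const_mul _)
  have step1 : ∫ z in E, f z ≤ ∫ z in E, (Real.exp M + (1 / M) * ell (f z)) :=
    setIntegral_mono_on hEint_f hsum hE
      (fun z _ => key_ineq (hf_nonneg z) hM)
  have step2 : ∫ z in E, (Real.exp M + (1 / M) * ell (f z))
      = Real.exp M * (volume E).toReal + (1 / M) * ∫ z in E, ell (f z) := by
    rw [integral_add hconst (hEint_ell.const_mul _), setIntegral_const,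
      MeasureTheory.integral_const_mul, smul_eq_mul, mul_comm, Measure.real]
  have step3 : ∫ z in E, ell (f z) ≤ ∫ z in Set.Icc 0 ζ, ell (f z) :=
    setIntegral_mono_set hℓf_int
      (Filter.Eventually.of_forall fun z => ell_nonneg (hf_nonneg z))
      (HasSubset.Subset.eventuallyLE hEsub)
  have : (1 / M) * ∫ z in E, ell (f z) ≤ (1 / M) * ∫ z in Set.Icc 0 ζ, ell (f z) :=
    mul_le_mul_of_nonneg_left step3 (by positivity)
  linarith [step1, step2.le, step2.ge]
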